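/- Suppose rank[X_i(k); U_i(k)] = n+m for all k = T_{i−1},…,T_i−1 and all i = 1,…,N_i (with T_0 = 0). Then for every sequence of gains K(k) ∈ ℝ^{m×n} (k = 0,…,T−1) there exist matrices G(k) ∈ ℝ^{L×n} satisfying X_i(k)G(k) = I_n and U_i(k)G(k) = K(k) for k = T_{i−1},…,T_i−1 and i = 1,…,N_i; moreover, for any such G(k), A(k) + B(k)K(k) = X_i(k+1)G(k) for k = T_{i−1},…,T_i−1, so every closed-loop trajectory satisfies x(k+1) = X_i(k+1)G(k)x(k) on the i-th subinterval. -/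
import Mathlib

open Matrix

lemma exists_right_inv_of_rank {L : ℕ} {ι : Type*} [Fintype ι] [DecidableEq ι]
    (M : Matrix ι (Fin L) ℝ) (h : M.rank = Fintype.card ι) :
    ∃ G : Matrix (Fin L) ι ℝ, M * G = 1 := by
  rw [← Matrix.mulVec_surjective_iff_exists_right_inverse]
  have : LinearMap.range M.mulVecLin = ⊤ := by
    apply Submodule.eq_top_of_finrank_eq
    rw [← Matrix.rank, h, Module.finrank_pi]
  intro y
  exact LinearMap.range_eq_top.mp this y

lemma mono_aux (Ni : ℕ) (Tseq : ℕ → ℕ) (hTmono : ∀ i < Ni, Tseq i < Tseq (i + 1)) :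
    ∀ i, i ≤ Ni → Tseq i ≤ Tseq Ni := by
  induction Ni with
  | zero => intro i hi; have : i = 0 := by omega
            simp [this]
  | succ N ih =>
    intro i hi
    rcases Nat.lt_or_ge i (N + 1) with h | h
    · exact ((ih (fun j hj => hTmono j (by omega)) i (by omega)).trans (hTmono N (by omega)).le)
    · have : i = N + 1 := by omega
      simp [this]

/-- Data-driven closed-loop representation from successive ensembles
of experiments (Lemma 1 of the paper). `Tseq i` denotes the instant `T_i`. -/
theorem data_driven_representation_successive_ensembles
    {n m L : ℕ} (Ni : ℕ)
    (Tseq : ℕ → ℕ) (hT0 : Tseq 0 = 0)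
    (hTmono : ∀ i < Ni, Tseq i < Tseq (i + 1))
    (A : ℕ → Matrix (Fin n) (Fin n) ℝ) (B : ℕ → Matrix (Fin n) (Fin m) ℝ)
    (Xi : ℕ → ℕ → Matrix (Fin n) (Fin L) ℝ) (Ui : ℕ → ℕ → Matrix (Fin m) (Fin L) ℝ)
    (hdata : ∀ i, 1 ≤ i → i ≤ Ni → ∀ k, Tseq (i - 1) ≤ k → k < Tseq i →
      Xi i (k + 1) = A k * Xi i k + B k * Ui i k)
    (hrank : ∀ i, 1 ≤ i → i ≤ Ni → ∀ k, Tseq (i - 1) ≤ k → k < Tseq i →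
      (Matrix.fromRows (Xi i k) (Ui i k)).rank = n + m) :
    ∀ K : ℕ → Matrix (Fin m) (Fin n) ℝ,
      (∀ i, 1 ≤ i → i ≤ Ni → ∀ k, Tseq (i - 1) ≤ k → k < Tseq i →
        ∃ G : Matrix (Fin L) (Fin n) ℝ,
          Xi i k * G = (1 : Matrix (Fin n) (Fin n) ℝ) ∧ Ui i k * G = K k) ∧
      ∀ G : ℕ → Matrix (Fin L) (Fin n) ℝ,
        (∀ i, 1 ≤ i → i ≤ Ni → ∀ k, Tseq (i - 1) ≤ k → k < Tseq i →
          Xi i k * G k = (1 : Matrix (Fin n) (Fin n) ℝ) ∧ Ui i k * G k = K k) →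
        ∀ i, 1 ≤ i → i ≤ Ni → ∀ k, Tseq (i - 1) ≤ k → k < Tseq i →
          A k + B k * K k = Xi i (k + 1) * G k ∧
          ∀ x : ℕ → Fin n → ℝ,
            (∀ j < Tseq Ni, x (j + 1) = (A j + B j * K j).mulVec (x j)) →
            x (k + 1) = (Xi i (k + 1) * G k).mulVec (x k) := by
  intro K
  constructor
  · intro i hi1 hiN k hk1 hk2
    obtain ⟨G₀, hG₀⟩ := exists_right_inv_of_rank (Matrix.fromRows (Xi i k) (Ui i k))
      (by simpa using hrank i hi1 hiN k hk1 hk2)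
    refine ⟨G₀ * Matrix.fromRows (1 : Matrix (Fin n) (Fin n) ℝ) (K k), ?_, ?_⟩
    · have h := congrArg (fun M => M * Matrix.fromRows (1 : Matrix (Fin n) (Fin n) ℝ) (K k)) hG₀
      simp only [Matrix.mul_assoc] at h
      rw [Matrix.fromRows_mul, Matrix.one_mul, Matrix.fromRows_ext_iff] at h
      exact h.1
    · have h := congrArg (fun M => M * Matrix.fromRows (1 : Matrix (Fin n) (Fin n) ℝ) (K k)) hG₀
      simp only [Matrix.mul_assoc] at h
      rw [Matrix.fromRows_mul, Matrix.one_mul, Matrix.fromRows_ext_iff] at h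
      exact h.2
  · intro G hG i hi1 hiN k hk1 hk2
    obtain ⟨hX, hU⟩ := hG i hi1 hiN k hk1 hk2
    have key : A k + B k * K k = Xi i (k + 1) * G k := by
      rw [hdata i hi1 hiN k hk1 hk2, Matrix.add_mul, Matrix.mul_assoc, Matrix.mul_assoc,
        hX, hU, Matrix.mul_one]
    refine ⟨key, fun x hx => ?_⟩
    have hle : Tseq i ≤ Tseq Ni := mono_aux Ni Tseq hTmono i hiN
    rw [hx k (lt_of_lt_of_le hk2 hle), key]
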